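/- arXiv:0905.0219 — 4 statements merged into one kernel-verified Lean document; each statement's English description precedes it below -/
import Mathlib

section
/- Let n ≥ 1 and let A be an n×n Perron–Frobenius matrix. Then 1 + (∑_{i,j} A_{ij}) − n ≤ λ(A)^n, where λ(A) is the spectral radius of A. (Equivalently, 1 + ∑_i (r_i − 1) ≤ λ(A)^n, where r_i = ∑_j A_{ij} is the i-th row sum, i.e., the out-degree of the i-th vertex of the adjacency graph of A.) -/
open scoped ENNReal
open scoped NNReal

/-- A Perron–Frobenius matrix: a square matrix with nonnegative integer entries
(entries in `ℕ`) such that some positive power has all entries strictly positive. -/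
def IsPerronFrobenius {n : ℕ} (A : Matrix (Fin n) (Fin n) ℕ) : Prop :=
  ∃ k : ℕ, 0 < k ∧ ∀ i j, 0 < (A ^ k) i j

/-- The spectral radius `λ(A)` of a nonnegative integer matrix, defined as the
spectral radius of the matrix obtained by casting its entries into `ℂ`. -/
noncomputable def matrixSpectralRadius {n : ℕ} (A : Matrix (Fin n) (Fin n) ℕ) : ℝ≥0∞ :=
  spectralRadius ℂ (A.map (Nat.cast : ℕ → ℂ))

namespace HamSongAux

open Finset

variable {n : ℕ} (A : Matrix (Fin n) (Fin n) ℕ)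

/-- The number of walks of length `m` starting at `i` (the `i`-th row sum of `A ^ m`). -/
def rs (m : ℕ) (i : Fin n) : ℕ := ∑ j, (A ^ m) i j

open Classical in
/-- The set of vertices reachable from `i` by a walk of length at most `t`. -/
noncomputable def ball (t : ℕ) (i : Fin n) : Finset (Fin n) :=
  Finset.univ.filter fun j => ∃ s ≤ t, 0 < (A ^ s) i j

lemma mem_ball {t : ℕ} {i j : Fin n} : j ∈ ball A t i ↔ ∃ s ≤ t, 0 < (A ^ s) i j := by
  simp [ball]

lemma exists_pos_of_sum_pos {g : Fin n → ℕ} (h : 0 < ∑ v, g v) : ∃ v, 0 < g v := by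
  by_contra hc
  push_neg at hc
  have : ∑ v, g v = 0 := Finset.sum_eq_zero fun v _ => Nat.le_zero.mp (hc v)
  omega

lemma rs_zero (i : Fin n) : rs A 0 i = 1 := by
  simp [rs, Matrix.one_apply]

lemma rs_add (a b : ℕ) (i : Fin n) :
    rs A (a + b) i = ∑ v, (A ^ a) i v * rs A b v := by
  simp only [rs, pow_add, Matrix.mul_apply]
  rw [Finset.sum_comm]
  simp [Finset.mul_sum]

lemma row_pos (hA : IsPerronFrobenius A) (i : Fin n) : ∃ j, 0 < A i j := by
  obtain ⟨k, hk, hpos⟩ := hA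
  obtain ⟨k', rfl⟩ : ∃ k', k = k' + 1 := ⟨k - 1, by omega⟩
  have h := hpos i i
  rw [pow_succ', Matrix.mul_apply] at h
  obtain ⟨v, hv⟩ := exists_pos_of_sum_pos h
  exact ⟨v, Nat.pos_of_ne_zero fun h0 => by simp [h0] at hv⟩

lemma deg_pos (hA : IsPerronFrobenius A) (i : Fin n) : 1 ≤ ∑ j, A i j := by
  obtain ⟨j, hj⟩ := row_pos A hA i
  exact le_trans hj (Finset.single_le_sum (fun _ _ => Nat.zero_le _) (Finset.mem_univ j))

lemma rs_pos (hA : IsPerronFrobenius A) : ∀ m i, 1 ≤ rs A m i := by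
  intro m
  induction m with
  | zero => intro i; simp [rs_zero]
  | succ m ih =>
    intro i
    obtain ⟨j, hj⟩ := row_pos A hA i
    have h : rs A (1 + m) i = ∑ v, (A ^ 1) i v * rs A m v := rs_add A 1 m i
    rw [Nat.add_comm 1 m] at h
    rw [h]
    have h1 : 1 ≤ (A ^ 1) i j * rs A m j := by
      rw [pow_one]
      exact Nat.mul_pos hj (ih j)
    exact le_trans h1 (Finset.single_le_sum (f := fun v => (A ^ 1) i v * rs A m v)
      (fun _ _ => Nat.zero_le _) (Finset.mem_univ j))

lemma ball_mono {t t' : ℕ} (h : t ≤ t') (i : Fin n) : ball A t i ⊆ ball A t' i := by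
  intro j hj
  rw [mem_ball] at hj ⊢
  obtain ⟨s, hs, hpos⟩ := hj
  exact ⟨s, le_trans hs h, hpos⟩

lemma nat_sum_biUnion_le (s : Finset (Fin n)) (t : Fin n → Finset (Fin n)) (f : Fin n → ℕ) :
    ∑ u ∈ s.biUnion t, f u ≤ ∑ v ∈ s, ∑ u ∈ t v, f u := by
  classical
  induction s using Finset.induction_on with
  | empty => simp
  | insert _ _ ha ih =>
    rename_i a s
    rw [Finset.biUnion_insert, Finset.sum_insert ha]
    have h := Finset.sum_union_inter (s₁ := t a) (s₂ := s.biUnion t) (f := f)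
    omega

/-- The key combinatorial induction: the number of walks of length `t+1` from `i`
is at least `1` plus the sum of `(out-degree − 1)` over the ball of radius `t`. -/
lemma key (hA : IsPerronFrobenius A) :
    ∀ t i, 1 + ∑ v ∈ ball A t i, ((∑ j, A v j) - 1) ≤ rs A (t + 1) i := by
  intro t
  induction t with
  | zero =>
    intro i
    have hb : ball A 0 i = {i} := by
      ext j
      simp only [mem_ball, Nat.le_zero, Finset.mem_singleton]
      constructor
      · rintro ⟨s, rfl, hpos⟩
        simp only [pow_zero, Matrix.one_apply] at hpos
        by_contra h
        simp [Ne.symm h] at hpos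
      · rintro rfl
        exact ⟨0, rfl, by simp [Matrix.one_apply]⟩
    have hrs : rs A 1 i = ∑ j, A i j := by simp [rs]
    have hd := deg_pos A hA i
    rw [hb, Finset.sum_singleton, hrs]
    omega
  | succ t ih =>
    intro i
    classical
    set N : Finset (Fin n) := Finset.univ.filter (fun v => 0 < A i v) with hN
    have h1 : rs A (t + 1 + 1) i = ∑ v, A i v * rs A (t + 1) v := by
      rw [show t + 1 + 1 = 1 + (t + 1) from by omega, rs_add]
      simp [pow_one]
    have h2 : ∑ v, A i v * rs A (t + 1) v = ∑ v ∈ N, A i v * rs A (t + 1) v := by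
      rw [hN]
      refine (Finset.sum_filter_of_ne ?_).symm
      intro v _ hv
      exact Nat.pos_of_ne_zero fun h0 => hv (by simp [h0])
    have h3 : ∀ v ∈ N, A i v + (rs A (t + 1) v - 1) ≤ A i v * rs A (t + 1) v := by
      intro v hv
      have hAv : 1 ≤ A i v := (Finset.mem_filter.mp hv).2
      have hrs : 1 ≤ rs A (t + 1) v := rs_pos A hA _ _
      obtain ⟨b, hb⟩ : ∃ b, rs A (t + 1) v = b + 1 := ⟨rs A (t + 1) v - 1, by omega⟩
      rw [hb, Nat.mul_add, Nat.mul_one]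
      have h := Nat.le_mul_of_pos_left b hAv
      omega
    have h4 : ∑ v ∈ N, A i v = ∑ j, A i j := by
      rw [hN]
      refine Finset.sum_filter_of_ne ?_
      intro v _ hv
      exact Nat.pos_of_ne_zero hv
    have h5 : ∀ v ∈ N, ∑ u ∈ ball A t v, ((∑ j, A u j) - 1) ≤ rs A (t + 1) v - 1 := by
      intro v _
      have := ih v
      omega
    have hsub : ball A (t + 1) i ⊆ insert i (N.biUnion (ball A t)) := by
      intro u hu
      rw [mem_ball] at hu
      obtain ⟨s, hs, hpos⟩ := hu
      match s with
      | 0 =>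
        simp only [pow_zero, Matrix.one_apply] at hpos
        have : u = i := by
          by_contra h
          simp [Ne.symm h] at hpos
        exact this ▸ Finset.mem_insert_self _ _
      | s + 1 =>
        rw [pow_succ', Matrix.mul_apply] at hpos
        obtain ⟨v, hv⟩ := exists_pos_of_sum_pos hpos
        have hv1 : 0 < A i v := Nat.pos_of_ne_zero fun h0 => by simp [h0] at hv
        have hv2 : 0 < (A ^ s) v u := Nat.pos_of_ne_zero fun h0 => by simp [h0] at hv
        refine Finset.mem_insert_of_mem (Finset.mem_biUnion.mpr ⟨v, ?_, ?_⟩)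
        · rw [hN]; simp [hv1]
        · exact mem_ball A |>.mpr ⟨s, by omega, hv2⟩
    have hb : ∑ u ∈ ball A (t + 1) i, ((∑ j, A u j) - 1)
        ≤ ∑ u ∈ insert i (N.biUnion (ball A t)), ((∑ j, A u j) - 1) :=
      Finset.sum_le_sum_of_subset hsub
    have hins : ∑ u ∈ insert i (N.biUnion (ball A t)), ((∑ j, A u j) - 1)
        ≤ ((∑ j, A i j) - 1) + ∑ u ∈ N.biUnion (ball A t), ((∑ j, A u j) - 1) := by
      by_cases hi : i ∈ N.biUnion (ball A t)
      · rw [Finset.insert_eq_self.mpr hi]; omega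
      · rw [Finset.sum_insert hi]
    have hbiu : ∑ u ∈ N.biUnion (ball A t), ((∑ j, A u j) - 1)
        ≤ ∑ v ∈ N, ∑ u ∈ ball A t v, ((∑ j, A u j) - 1) :=
      nat_sum_biUnion_le N (ball A t) _
    have hsum5 : ∑ v ∈ N, ∑ u ∈ ball A t v, ((∑ j, A u j) - 1) ≤ ∑ v ∈ N, (rs A (t + 1) v - 1) :=
      Finset.sum_le_sum h5
    have hfin : ∑ v ∈ N, (A i v + (rs A (t + 1) v - 1)) ≤ ∑ v ∈ N, A i v * rs A (t + 1) v :=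
      Finset.sum_le_sum h3
    have hsplit : ∑ v ∈ N, (A i v + (rs A (t + 1) v - 1))
        = ∑ v ∈ N, A i v + ∑ v ∈ N, (rs A (t + 1) v - 1) := Finset.sum_add_distrib
    have hdi : 1 ≤ ∑ j, A i j := deg_pos A hA i
    rw [h1, h2]
    omega

lemma ball_step {t : ℕ} {i : Fin n} (h : ball A (t + 1) i = ball A t i) :
    ball A (t + 2) i = ball A (t + 1) i := by
  refine Finset.Subset.antisymm ?_ (ball_mono A (by omega) i)
  intro u hu
  rw [mem_ball] at hu ⊢
  obtain ⟨s, hs, hpos⟩ := hu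
  rcases Nat.lt_or_ge s (t + 2) with h' | h'
  · exact ⟨s, by omega, hpos⟩
  · have hs2 : s = t + 2 := by omega
    subst hs2
    rw [show t + 2 = (t + 1) + 1 from rfl, pow_succ, Matrix.mul_apply] at hpos
    obtain ⟨v, hv⟩ := exists_pos_of_sum_pos hpos
    have ha : 0 < (A ^ (t + 1)) i v := Nat.pos_of_ne_zero fun h0 => by simp [h0] at hv
    have hb : 0 < A v u := Nat.pos_of_ne_zero fun h0 => by simp [h0] at hv
    have hv' : v ∈ ball A t i := h ▸ (mem_ball A).mpr ⟨t + 1, le_refl _, ha⟩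
    obtain ⟨s', hs', ha'⟩ := (mem_ball A).mp hv'
    refine ⟨s' + 1, by omega, ?_⟩
    rw [pow_succ, Matrix.mul_apply]
    exact lt_of_lt_of_le (Nat.mul_pos ha' hb)
      (Finset.single_le_sum (f := fun w => (A ^ s') i w * A w u)
        (fun _ _ => Nat.zero_le _) (Finset.mem_univ v))

lemma ball_stab {t : ℕ} {i : Fin n} (h : ball A (t + 1) i = ball A t i) :
    ∀ m, t ≤ m → ball A m i = ball A t i := by
  have hstep : ∀ m, t ≤ m → ball A (m + 1) i = ball A m i := by
    intro m hm
    induction m, hm using Nat.le_induction with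
    | base => exact h
    | succ m hm ih => exact ball_step A ih
  intro m hm
  induction m, hm using Nat.le_induction with
  | base => rfl
  | succ m hm ih => rw [hstep m hm, ih]

lemma ball_full (hn : 1 ≤ n) (hA : IsPerronFrobenius A) (i : Fin n) :
    ball A (n - 1) i = Finset.univ := by
  obtain ⟨k, hk, hpos⟩ := hA
  have hex : ∃ t < n, ball A (t + 1) i = ball A t i := by
    by_contra hc
    push_neg at hc
    have hcard : ∀ t, t ≤ n → t + 1 ≤ (ball A t i).card := by
      intro t ht
      induction t with
      | zero =>
        have hi : i ∈ ball A 0 i := (mem_ball A).mpr ⟨0, le_refl _, by simp [Matrix.one_apply]⟩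
        exact Finset.card_pos.mpr ⟨i, hi⟩
      | succ t ih =>
        have h1 := ih (by omega)
        have hss : ball A t i ⊂ ball A (t + 1) i :=
          HasSubset.Subset.ssubset_of_ne (ball_mono A (by omega) i)
            (fun h => hc t (by omega) h.symm)
        have := Finset.card_lt_card hss
        omega
    have h1 := hcard n (le_refl _)
    have h2 : (ball A n i).card ≤ n := by
      have := Finset.card_le_univ (ball A n i)
      simpa using this
    omega
  obtain ⟨t, htn, hstable⟩ := hex
  apply Finset.eq_univ_of_forall
  intro j
  have hj : j ∈ ball A k i := (mem_ball A).mpr ⟨k, le_refl _, hpos i j⟩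
  rcases le_or_gt k (n - 1) with h | h
  · exact ball_mono A h i hj
  · have h1 : ball A k i = ball A t i := ball_stab A hstable k (by omega)
    exact ball_mono A (by omega) i (h1 ▸ hj)

lemma rs_n (hn : 1 ≤ n) (hA : IsPerronFrobenius A) (i : Fin n) :
    1 + ∑ v, ((∑ j, A v j) - 1) ≤ rs A n i := by
  have h := key A hA (n - 1) i
  rw [ball_full A hn hA i, show n - 1 + 1 = n from by omega] at h
  exact h

lemma rs_pow (hn : 1 ≤ n) (hA : IsPerronFrobenius A) :
    ∀ k i, (1 + ∑ v, ((∑ j, A v j) - 1)) ^ k ≤ rs A (n * k) i := by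
  intro k
  induction k with
  | zero => intro i; simp [rs_zero]
  | succ k ih =>
    intro i
    set W : ℕ := 1 + ∑ v, ((∑ j, A v j) - 1) with hW
    have h1 : rs A (n * (k + 1)) i = ∑ v, (A ^ n) i v * rs A (n * k) v := by
      rw [show n * (k + 1) = n + n * k from by ring]
      exact rs_add A n (n * k) i
    have h2 : ∑ v, (A ^ n) i v * W ^ k ≤ ∑ v, (A ^ n) i v * rs A (n * k) v :=
      Finset.sum_le_sum fun v _ => Nat.mul_le_mul_left _ (ih v)
    have h3 : (∑ v, (A ^ n) i v) * W ^ k = ∑ v, (A ^ n) i v * W ^ k :=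
      Finset.sum_mul ..
    have h4 : W ≤ ∑ v, (A ^ n) i v := rs_n A hn hA i
    calc W ^ (k + 1) = W * W ^ k := by ring
      _ ≤ (∑ v, (A ^ n) i v) * W ^ k := Nat.mul_le_mul_right _ h4
      _ = ∑ v, (A ^ n) i v * W ^ k := h3
      _ ≤ ∑ v, (A ^ n) i v * rs A (n * k) v := h2
      _ = rs A (n * (k + 1)) i := h1.symm

end HamSongAux

open HamSongAux Filter

/-- (Ham–Song) For an `n × n` Perron–Frobenius matrix `A` with `n ≥ 1`,
`1 + (∑_{i,j} A_{ij}) − n ≤ λ(A)^n`. -/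
theorem ham_song_inequality {n : ℕ} (hn : 1 ≤ n) (A : Matrix (Fin n) (Fin n) ℕ)
    (hA : IsPerronFrobenius A) :
    ((1 + ∑ i, ∑ j, A i j - n : ℕ) : ℝ≥0∞) ≤ matrixSpectralRadius A ^ n := by
  classical
  letI : SeminormedRing (Matrix (Fin n) (Fin n) ℂ) := Matrix.linftyOpSemiNormedRing
  letI : NormedRing (Matrix (Fin n) (Fin n) ℂ) := Matrix.linftyOpNormedRing
  letI : NormedAlgebra ℂ (Matrix (Fin n) (Fin n) ℂ) := Matrix.linftyOpNormedAlgebra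
  set W : ℕ := 1 + ∑ v, ((∑ j, A v j) - 1) with hWdef
  -- relate W with the statement's LHS
  have hdsum : ∑ v, ((∑ j, A v j) - 1) + n = ∑ i, ∑ j, A i j := by
    have hterm : ∀ v : Fin n, ((∑ j, A v j) - 1) + 1 = ∑ j, A v j := fun v => by
      have := HamSongAux.deg_pos A hA v
      omega
    calc ∑ v, ((∑ j, A v j) - 1) + n = ∑ v, (((∑ j, A v j) - 1) + 1) := by
          rw [Finset.sum_add_distrib]
          simp
      _ = ∑ v, ∑ j, A v j := Finset.sum_congr rfl fun v _ => hterm v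
  have hWeq : (1 + ∑ i, ∑ j, A i j - n : ℕ) = W := by omega
  rw [hWeq]
  -- the complex matrix
  set A' : Matrix (Fin n) (Fin n) ℂ := A.map (Nat.cast : ℕ → ℂ) with hA'
  have hpow : ∀ m : ℕ, A' ^ m = (A ^ m).map (Nat.cast : ℕ → ℂ) := by
    intro m
    have h1 : A' = (Nat.castRingHom ℂ).mapMatrix A := by
      rw [hA']; rfl
    rw [h1, ← map_pow]
    rfl
  have hnorm : ∀ (m : ℕ) (i : Fin n), ((rs A m i : ℝ≥0)) ≤ ‖A' ^ m‖₊ := by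
    intro m i
    rw [hpow, Matrix.linfty_opNNNorm_def]
    have h1 : ∑ j, ‖((A ^ m).map (Nat.cast : ℕ → ℂ)) i j‖₊ = ((rs A m i : ℝ≥0)) := by
      simp [Matrix.map_apply, rs]
    rw [← h1]
    exact Finset.le_sup (f := fun i => ∑ j, ‖((A ^ m).map (Nat.cast : ℕ → ℂ)) i j‖₊)
      (Finset.mem_univ i)
  have i₀ : Fin n := ⟨0, hn⟩
  -- Gelfand's formula
  have hG := spectrum.pow_nnnorm_pow_one_div_tendsto_nhds_spectralRadius A'
  have hφ : Tendsto (fun k : ℕ => n * (k + 1)) atTop atTop := by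
    apply Filter.tendsto_atTop_atTop.mpr
    intro b
    exact ⟨b, fun a ha => le_trans (by omega) (Nat.le_mul_of_pos_left (a + 1) hn)⟩
  have hG2 := hG.comp hφ
  have hlow : ∀ k : ℕ, (W : ℝ≥0∞) ^ ((n : ℝ)⁻¹)
      ≤ (‖A' ^ (n * (k + 1))‖₊ : ℝ≥0∞) ^ (1 / (n * (k + 1) : ℕ) : ℝ) := by
    intro k
    set m : ℕ := n * (k + 1) with hm
    have h1 : (W : ℝ≥0∞) ^ (k + 1) ≤ (‖A' ^ m‖₊ : ℝ≥0∞) := by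
      have hnat : W ^ (k + 1) ≤ rs A m i₀ := rs_pow A hn hA (k + 1) i₀
      have h2 : ((W ^ (k + 1) : ℕ) : ℝ≥0) ≤ (rs A m i₀ : ℝ≥0) := Nat.cast_le.mpr hnat
      have h3 := le_trans h2 (hnorm m i₀)
      calc (W : ℝ≥0∞) ^ (k + 1) = (((W ^ (k + 1) : ℕ) : ℝ≥0) : ℝ≥0∞) := by push_cast; rfl
        _ ≤ (‖A' ^ m‖₊ : ℝ≥0∞) := ENNReal.coe_le_coe.mpr h3
    have h4 : ((W : ℝ≥0∞) ^ (k + 1)) ^ (1 / (m : ℕ) : ℝ) ≤ (‖A' ^ m‖₊ : ℝ≥0∞) ^ (1 / (m : ℕ) : ℝ) :=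
      ENNReal.rpow_le_rpow h1 (by positivity)
    have h5 : ((W : ℝ≥0∞) ^ (k + 1)) ^ (1 / (m : ℕ) : ℝ) = (W : ℝ≥0∞) ^ ((n : ℝ)⁻¹) := by
      rw [← ENNReal.rpow_natCast (W : ℝ≥0∞) (k + 1), ← ENNReal.rpow_mul]
      congr 1
      have hm0 : (m : ℝ) = (n : ℝ) * ((k : ℝ) + 1) := by rw [hm]; push_cast; ring
      rw [hm0]
      have hn0 : (n : ℝ) ≠ 0 := Nat.cast_ne_zero.mpr (by omega)
      have hk0 : ((k : ℝ) + 1) ≠ 0 := by positivity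
      field_simp
      rw [Nat.cast_add, Nat.cast_one]
    rw [← h5]
    exact h4
  have hlim : (W : ℝ≥0∞) ^ ((n : ℝ)⁻¹) ≤ spectralRadius ℂ A' := by
    refine ge_of_tendsto hG2 ?_
    filter_upwards with k
    exact hlow k
  -- raise both sides to the n-th power
  have hfinal : (W : ℝ≥0∞) ≤ spectralRadius ℂ A' ^ n := by
    have h1 := ENNReal.rpow_le_rpow hlim (by positivity : (0:ℝ) ≤ (n : ℝ))
    have h2 : ((W : ℝ≥0∞) ^ ((n : ℝ)⁻¹)) ^ (n : ℝ) = (W : ℝ≥0∞) := by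
      rw [← ENNReal.rpow_mul]
      have hn0 : (n : ℝ) ≠ 0 := Nat.cast_ne_zero.mpr (by omega)
      rw [inv_mul_cancel₀ hn0, ENNReal.rpow_one]
    have h3 : (spectralRadius ℂ A') ^ ((n : ℝ)) = spectralRadius ℂ A' ^ n :=
      ENNReal.rpow_natCast _ n
    rw [h2, h3] at h1
    exact h1
  exact hfinal
end

section
/- Let n ≥ 1, let A be an n×n Perron–Frobenius matrix, and let E = ∑_{i,j} A_{ij} be the sum of all entries of A. Then for every index i, the i-th row sum of A^n satisfies ∑_j (A^n)_{ij} ≥ E − (n − 1), and likewise every column sum of A^n satisfies ∑_i (A^n)_{ij} ≥ E − (n − 1). -/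
open Finset Matrix

namespace PFaux

variable {n : ℕ}

/-- One-step successors of a set of vertices. -/
def step (A : Matrix (Fin n) (Fin n) ℕ) (S : Finset (Fin n)) : Finset (Fin n) :=
  Finset.univ.filter (fun u => ∃ v ∈ S, 0 < A v u)

/-- Vertices reachable from `i` in at most `m` steps. -/
def reach (A : Matrix (Fin n) (Fin n) ℕ) (i : Fin n) : ℕ → Finset (Fin n)
  | 0 => {i}
  | m + 1 => reach A i m ∪ step A (reach A i m)

lemma reach_subset_succ (A : Matrix (Fin n) (Fin n) ℕ) (i : Fin n) (m : ℕ) :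
    reach A i m ⊆ reach A i (m + 1) := by
  simp [reach]

lemma reach_mono (A : Matrix (Fin n) (Fin n) ℕ) (i : Fin n) {a b : ℕ} (h : a ≤ b) :
    reach A i a ⊆ reach A i b := by
  induction b with
  | zero => simp [Nat.le_zero.mp h]
  | succ b ih =>
    rcases Nat.lt_or_ge a (b+1) with h' | h'
    · exact (ih (Nat.lt_succ_iff.mp h')).trans (reach_subset_succ A i b)
    · have : a = b + 1 := le_antisymm h h'
      simp [this]

lemma mem_reach_pow (A : Matrix (Fin n) (Fin n) ℕ) (i : Fin n) :
    ∀ m u, u ∈ reach A i m → ∃ t ≤ m, 0 < (A ^ t) i u := by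
  intro m
  induction m with
  | zero =>
    intro u hu
    simp only [reach, Finset.mem_singleton] at hu
    exact ⟨0, le_refl 0, by simp [hu, Matrix.one_apply]⟩
  | succ m ih =>
    intro u hu
    simp only [reach, Finset.mem_union] at hu
    rcases hu with hu | hu
    · obtain ⟨t, ht, hpos⟩ := ih u hu
      exact ⟨t, ht.trans (Nat.le_succ m), hpos⟩
    · simp only [step, Finset.mem_filter] at hu
      obtain ⟨-, v, hv, hAv⟩ := hu
      obtain ⟨t, ht, hpos⟩ := ih v hv
      refine ⟨t + 1, Nat.succ_le_succ ht, ?_⟩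
      have h1 : (A ^ (t+1)) i u = ∑ w, (A ^ t) i w * A w u := by
        rw [pow_succ, Matrix.mul_apply]
      rw [h1]
      calc 0 < (A ^ t) i v * A v u := Nat.mul_pos hpos hAv
        _ ≤ ∑ w, (A ^ t) i w * A w u :=
          Finset.single_le_sum (f := fun w => (A ^ t) i w * A w u)
            (fun w _ => Nat.zero_le _) (Finset.mem_univ v)

lemma pow_mem_reach (A : Matrix (Fin n) (Fin n) ℕ) (i : Fin n) :
    ∀ t u, 0 < (A ^ t) i u → u ∈ reach A i t := by
  intro t
  induction t with
  | zero =>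
    intro u hu
    have : i = u := by
      by_contra h
      simp [Matrix.one_apply, h] at hu
    simp [reach, this]
  | succ t ih =>
    intro u hu
    have h : (A ^ (t+1)) i u = ∑ w, (A ^ t) i w * A w u := by
      rw [pow_succ, Matrix.mul_apply]
    rw [h] at hu
    have hex : ∃ v, 0 < (A ^ t) i v * A v u := by
      by_contra hc
      push_neg at hc
      simp only [Nat.le_zero] at hc
      simp [Finset.sum_eq_zero (fun v _ => hc v)] at hu
    obtain ⟨v, hv⟩ := hex
    have h1 : 0 < (A ^ t) i v := Nat.pos_of_mul_pos_left (by rwa [Nat.mul_comm] at hv)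
    have h2 : 0 < A v u := Nat.pos_of_mul_pos_left hv
    simp only [reach, Finset.mem_union, step, Finset.mem_filter]
    exact Or.inr ⟨Finset.mem_univ u, v, ih v h1, h2⟩

lemma reach_stab (A : Matrix (Fin n) (Fin n) ℕ) (i : Fin n) {m : ℕ}
    (h : reach A i m = reach A i (m + 1)) :
    ∀ t, reach A i (m + t) = reach A i m := by
  intro t
  induction t with
  | zero => rfl
  | succ t ih =>
    have h2 : reach A i (m + t + 1) = reach A i (m + t) ∪ step A (reach A i (m + t)) := rfl
    rw [show m + (t+1) = m + t + 1 from rfl, h2, ih]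
    exact h.symm

lemma exists_stab (A : Matrix (Fin n) (Fin n) ℕ) (i : Fin n) :
    ∃ m < n, reach A i m = reach A i (m + 1) := by
  by_contra h
  push_neg at h
  have key : ∀ m ≤ n, m + 1 ≤ (reach A i m).card := by
    intro m
    induction m with
    | zero => intro _; simp [reach]
    | succ m ih =>
      intro hm
      have h1 : m + 1 ≤ (reach A i m).card := ih (Nat.le_of_succ_le hm)
      have hne : reach A i m ≠ reach A i (m + 1) := h m (Nat.lt_of_succ_le hm)
      have hss : reach A i m ⊂ reach A i (m + 1) :=
        lt_of_le_of_ne (reach_subset_succ A i m) hne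
      have := Finset.card_lt_card hss
      omega
  have h1 := key n (le_refl n)
  have hcard : (reach A i n).card ≤ n := by
    simpa using Finset.card_le_univ (reach A i n)
  omega

lemma reach_subset_final (A : Matrix (Fin n) (Fin n) ℕ) (i : Fin n) (t : ℕ) :
    reach A i t ⊆ reach A i (n - 1) := by
  obtain ⟨m, hm, hstab⟩ := exists_stab A i
  rcases le_or_gt t (n - 1) with h | h
  · exact reach_mono A i h
  · have hmt : m ≤ t := by omega
    have heq : reach A i t = reach A i m := by
      have := reach_stab A i hstab (t - m)
      rwa [Nat.add_sub_cancel' hmt] at this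
    rw [heq]
    exact reach_mono A i (by omega)

/-- Main row lemma. -/
lemma row_sum_pow_ge (A : Matrix (Fin n) (Fin n) ℕ)
    (hA : ∃ k : ℕ, 0 < k ∧ ∀ i j, 0 < (A ^ k) i j) (i : Fin n) :
    (∑ u, ∑ v, A u v) - (n - 1) ≤ ∑ j, (A ^ n) i j := by
  obtain ⟨k, hk, hpos⟩ := hA
  have hn : 1 ≤ n := Fin.pos i
  -- every row sum positive
  have hrs : ∀ u, 0 < ∑ v, A u v := by
    intro u
    by_contra hc
    push_neg at hc
    have hz : ∀ v, A u v = 0 := fun v =>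
      Finset.sum_eq_zero_iff.mp (Nat.le_zero.mp hc) v (Finset.mem_univ v)
    have : (A ^ k) u u = 0 := by
      obtain ⟨k', rfl⟩ : ∃ k', k = k' + 1 := ⟨k - 1, by omega⟩
      rw [pow_succ', Matrix.mul_apply]
      exact Finset.sum_eq_zero (fun v _ => by simp [hz v])
    exact absurd (hpos u u) (by omega)
  -- reachability within n-1 steps
  have greach : ∀ u, ∃ t, (u ≠ i → 1 ≤ t ∧ t ≤ n - 1 ∧ 0 < (A ^ t) i u) ∧ (u = i → t = 0) := by
    intro u
    by_cases hui : u = i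
    · exact ⟨0, fun h => absurd hui h, fun _ => rfl⟩
    · have hu : u ∈ reach A i (n - 1) :=
        reach_subset_final A i k (pow_mem_reach A i k u (hpos i u))
      obtain ⟨t, ht, hp⟩ := mem_reach_pow A i (n - 1) u hu
      have ht1 : 1 ≤ t := by
        by_contra hc
        have : t = 0 := by omega
        subst this
        simp [Matrix.one_apply, Ne.symm hui] at hp
      exact ⟨t, fun _ => ⟨ht1, ht, hp⟩, fun h => absurd h hui⟩
  choose g hg hgi using greach
  -- telescoping induction
  have main : ∀ M, 1 ≤ M →
      (∑ v, A i v) + ∑ u ∈ Finset.univ.filter (fun u => 1 ≤ g u ∧ g u < M),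
        ((∑ v, A u v) - 1) ≤ ∑ j, (A ^ M) i j := by
    intro M hM
    induction M with
    | zero => omega
    | succ M ih =>
      rcases Nat.eq_or_lt_of_le hM with h1 | h1
      · -- M + 1 = 1, base case
        have : M = 0 := by omega
        subst this
        have hfil : Finset.univ.filter (fun u : Fin n => 1 ≤ g u ∧ g u < 0 + 1) = ∅ := by
          apply Finset.filter_false_of_mem
          intro u _
          omega
        rw [hfil]
        simp [pow_one]
      · -- inductive step, M ≥ 1
        have hM1 : 1 ≤ M := by omega
        have hRM := ih hM1
        have hexp : ∑ j, (A ^ (M+1)) i j = ∑ v, (A ^ M) i v * (∑ j, A v j) := by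
          have : ∀ j, (A ^ (M+1)) i j = ∑ v, (A ^ M) i v * A v j := by
            intro j; rw [pow_succ, Matrix.mul_apply]
          rw [Finset.sum_congr rfl (fun j _ => this j), Finset.sum_comm]
          exact Finset.sum_congr rfl (fun v _ => (Finset.mul_sum _ _ _).symm)
        have hterm : ∀ v : Fin n, (A ^ M) i v +
            (if 1 ≤ g v ∧ g v = M then (∑ j, A v j) - 1 else 0) ≤
            (A ^ M) i v * (∑ j, A v j) := by
          intro v
          by_cases hc : 1 ≤ g v ∧ g v = M
          · have hvne : v ≠ i := by
              intro h; rw [h] at hc; rw [hgi i rfl] at hc; omega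
            have hpv : 0 < (A ^ M) i v := by
              have := (hg v hvne).2.2
              rwa [hc.2] at this
            have hb : 1 ≤ ∑ j, A v j := hrs v
            rw [if_pos hc]
            obtain ⟨c, hcc⟩ : ∃ c, ∑ j, A v j = c + 1 := ⟨(∑ j, A v j) - 1, by omega⟩
            rw [hcc]
            have : c ≤ (A ^ M) i v * c := Nat.le_mul_of_pos_left c hpv
            calc (A ^ M) i v + (c + 1 - 1) = (A ^ M) i v + c := by omega
              _ ≤ (A ^ M) i v + (A ^ M) i v * c := by omega
              _ = (A ^ M) i v * (c + 1) := by ring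
          · rw [if_neg hc, Nat.add_zero]
            exact Nat.le_mul_of_pos_right _ (hrs v)
        have hstep : (∑ v, (A ^ M) i v) +
            (∑ u ∈ Finset.univ.filter (fun u => 1 ≤ g u ∧ g u = M), ((∑ j, A u j) - 1)) ≤
            ∑ j, (A ^ (M+1)) i j := by
          rw [hexp, Finset.sum_filter, ← Finset.sum_add_distrib]
          exact Finset.sum_le_sum (fun v _ => hterm v)
        have hsplit : Finset.univ.filter (fun u : Fin n => 1 ≤ g u ∧ g u < M + 1) =
            Finset.univ.filter (fun u => 1 ≤ g u ∧ g u < M) ∪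
            Finset.univ.filter (fun u => 1 ≤ g u ∧ g u = M) := by
          ext u
          simp only [Finset.mem_filter, Finset.mem_union, Finset.mem_univ, true_and]
          omega
        have hdisj : Disjoint (Finset.univ.filter (fun u : Fin n => 1 ≤ g u ∧ g u < M))
            (Finset.univ.filter (fun u => 1 ≤ g u ∧ g u = M)) := by
          simp only [Finset.disjoint_left, Finset.mem_filter, Finset.mem_univ, true_and]
          omega
        rw [hsplit, Finset.sum_union hdisj]
        omega
  have hfin := main n hn
  -- the filter at M = n is univ \ {i}
  have hfil : Finset.univ.filter (fun u : Fin n => 1 ≤ g u ∧ g u < n) =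
      Finset.univ.erase i := by
    ext u
    simp only [Finset.mem_filter, Finset.mem_univ, true_and, Finset.mem_erase, and_true]
    constructor
    · intro h hui
      rw [hgi u hui] at h
      omega
    · intro hui
      obtain ⟨h1, h2, _⟩ := hg u hui
      omega
  rw [hfil] at hfin
  have hcarderase : (Finset.univ.erase i).card = n - 1 := by
    rw [Finset.card_erase_of_mem (Finset.mem_univ i)]
    simp
  have hsum1 : ∑ u ∈ Finset.univ.erase i, (∑ v, A u v) =
      (∑ u ∈ Finset.univ.erase i, ((∑ v, A u v) - 1)) + (n - 1) := by
    have h1 : ∑ u ∈ Finset.univ.erase i, (∑ v, A u v) =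
        ∑ u ∈ Finset.univ.erase i, (((∑ v, A u v) - 1) + 1) :=
      Finset.sum_congr rfl (fun u _ => by have := hrs u; omega)
    rw [h1, Finset.sum_add_distrib, Finset.sum_const, smul_eq_mul, mul_one, hcarderase]
  have hsum2 : ∑ u, ∑ v, A u v = (∑ v, A i v) + ∑ u ∈ Finset.univ.erase i, (∑ v, A u v) :=
    (Finset.add_sum_erase _ _ (Finset.mem_univ i)).symm
  omega

end PFaux

/-- For an `n × n` Perron–Frobenius matrix `A` with `n ≥ 1` and total entry sum
`E = ∑_{i,j} A_{ij}`, every row sum and every column sum of `A^n` is at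
least `E − (n − 1)`. -/
theorem row_col_sums_of_power_ge {n : ℕ} (hn : 1 ≤ n) (A : Matrix (Fin n) (Fin n) ℕ)
    (hA : IsPerronFrobenius A) (E : ℕ) (hE : E = ∑ i, ∑ j, A i j) :
    (∀ i, E - (n - 1) ≤ ∑ j, (A ^ n) i j) ∧ (∀ j, E - (n - 1) ≤ ∑ i, (A ^ n) i j) := by
  obtain ⟨k, hk, hpos⟩ := hA
  constructor
  · intro i
    rw [hE]
    exact PFaux.row_sum_pow_ge A ⟨k, hk, hpos⟩ i
  · intro j
    have hT : ∃ k : ℕ, 0 < k ∧ ∀ i j, 0 < (Aᵀ ^ k) i j := by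
      refine ⟨k, hk, fun i j => ?_⟩
      rw [← Matrix.transpose_pow]
      exact hpos j i
    have := PFaux.row_sum_pow_ge Aᵀ hT j
    have hEt : ∑ u, ∑ v, Aᵀ u v = E := by
      rw [hE]
      exact Finset.sum_comm
    rw [hEt] at this
    calc E - (n - 1) ≤ ∑ i, (Aᵀ ^ n) j i := this
      _ = ∑ i, (A ^ n) i j := by
        apply Finset.sum_congr rfl
        intro i _
        rw [← Matrix.transpose_pow]
        rfl
end

section
/- Let n ≥ 1 and let A be an n×n Perron–Frobenius matrix with spectral radius λ(A). Then every row sum of A satisfies ∑_j A_{ij} ≤ λ(A)^n, and every column sum satisfies ∑_i A_{ij} ≤ λ(A)^n. -/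
open scoped ENNReal
open scoped NNReal

open Matrix Polynomial

namespace PFAux


variable {n : ℕ}

lemma entry_mul_le (A : Matrix (Fin n) (Fin n) ℕ) (a b : ℕ) (x y z : Fin n) :
    (A ^ a) x z * (A ^ b) z y ≤ (A ^ (a + b)) x y := by
  rw [pow_add, Matrix.mul_apply]
  exact Finset.single_le_sum (f := fun t => (A ^ a) x t * (A ^ b) t y)
    (fun t _ => Nat.zero_le _) (Finset.mem_univ z)

lemma exists_mid {A : Matrix (Fin n) (Fin n) ℕ} {a b : ℕ} {x y : Fin n}
    (h : 0 < (A ^ (a + b)) x y) : ∃ z, 0 < (A ^ a) x z ∧ 0 < (A ^ b) z y := by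
  rw [pow_add, Matrix.mul_apply] at h
  by_contra hc
  push_neg at hc
  have h0 : ∀ z ∈ Finset.univ, (A ^ a) x z * (A ^ b) z y = 0 := by
    intro z _
    rcases Nat.eq_zero_or_pos ((A ^ a) x z) with h1 | h1
    · simp [h1]
    · have h2 := Nat.le_zero.mp (hc z h1)
      simp [h2]
  rw [Finset.sum_eq_zero h0] at h
  exact lt_irrefl 0 h

lemma exists_short {A : Matrix (Fin n) (Fin n) ℕ} (hn : 1 ≤ n) {x y : Fin n} :
    ∀ k, 0 < (A ^ k) x y → ∃ m, m < n ∧ 0 < (A ^ m) x y := by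
  intro k
  induction k using Nat.strong_induction_on with
  | _ k ih =>
    intro hk
    by_cases hkn : k < n
    · exact ⟨k, hkn, hk⟩
    · push_neg at hkn
      have hchoice : ∀ s : Fin (n + 1),
          ∃ z, 0 < (A ^ (s : ℕ)) x z ∧ 0 < (A ^ (k - (s : ℕ))) z y := by
        intro s
        have hs : (s : ℕ) ≤ k := le_trans (Nat.le_of_lt_succ s.isLt) hkn
        have hadd : (s : ℕ) + (k - (s : ℕ)) = k := Nat.add_sub_cancel' hs
        exact exists_mid (by rwa [hadd])
      choose v hv1 hv2 using hchoice
      have hcard : Fintype.card (Fin n) < Fintype.card (Fin (n + 1)) := by simp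
      obtain ⟨s, t, hst, hvst⟩ := Fintype.exists_ne_map_eq_of_card_lt v hcard
      have key : ∀ s t : Fin (n + 1), (s : ℕ) < (t : ℕ) → v s = v t →
          ∃ m, m < n ∧ 0 < (A ^ m) x y := by
        intro s t hlt hveq
        have ht : (t : ℕ) ≤ k := le_trans (Nat.le_of_lt_succ t.isLt) hkn
        have hk' : (s : ℕ) + (k - (t : ℕ)) < k := by omega
        refine ih _ hk' ?_
        have h2 : 0 < (A ^ (k - (t : ℕ))) (v s) y := by rw [hveq]; exact hv2 t
        exact lt_of_lt_of_le (Nat.mul_pos (hv1 s) h2) (entry_mul_le A _ _ x y (v s))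
      rcases Ne.lt_or_gt hst with h | h
      · exact key s t h hvst
      · exact key t s h hvst.symm

/-- Main combinatorial counting inequality. -/
lemma count_le (A : Matrix (Fin n) (Fin n) ℕ) (i : Fin n) (e : Fin n → ℕ)
    (he1 : ∀ j, 1 ≤ e j) (he2 : ∀ j, 0 < (A ^ (e j - 1)) j i) :
    ∀ t E, (∑ p : Fin t → Fin n, if (∑ s, e (p s)) = E then ∏ s, A i (p s) else 0)
      ≤ (A ^ E) i i := by
  intro t
  induction t with
  | zero =>
    intro E
    cases E with
    | zero => simp
    | succ E => simp
  | succ t ih =>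
    intro E
    have hsplit : (∑ p : Fin (t + 1) → Fin n, if (∑ s, e (p s)) = E then ∏ s, A i (p s) else 0)
        = ∑ j : Fin n, ∑ q : Fin t → Fin n,
            (if e j + ∑ s, e (q s) = E then A i j * ∏ s, A i (q s) else 0) := by
      have key := Fintype.sum_equiv (Fin.consEquiv (fun _ : Fin (t + 1) => Fin n))
        (fun x : Fin n × (Fin t → Fin n) =>
          if e x.1 + ∑ s, e (x.2 s) = E then A i x.1 * ∏ s, A i (x.2 s) else 0)
        (fun p : Fin (t + 1) → Fin n => if (∑ s, e (p s)) = E then ∏ s, A i (p s) else 0)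
        (by rintro ⟨j, q⟩
            simp [Fin.sum_univ_succ, Fin.prod_univ_succ])
      rw [Fintype.sum_prod_type] at key
      exact key.symm
    rw [hsplit]
    -- bound each j-term
    have hterm : ∀ j : Fin n,
        (∑ q : Fin t → Fin n, if e j + ∑ s, e (q s) = E then A i j * ∏ s, A i (q s) else 0)
        ≤ if e j ≤ E then A i j * (A ^ (E - e j)) i i else 0 := by
      intro j
      by_cases hje : e j ≤ E
      · rw [if_pos hje]
        have : ∀ q : Fin t → Fin n,
            (if e j + ∑ s, e (q s) = E then A i j * ∏ s, A i (q s) else 0)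
            = A i j * (if (∑ s, e (q s)) = E - e j then ∏ s, A i (q s) else 0) := by
          intro q
          by_cases h : (∑ s, e (q s)) = E - e j
          · rw [if_pos (show e j + ∑ s, e (q s) = E by clear * - hje h; omega), if_pos h]
          · rw [if_neg (show ¬ (e j + ∑ s, e (q s) = E) by clear * - hje h; omega), if_neg h, mul_zero]
        rw [Finset.sum_congr rfl (fun q _ => this q), ← Finset.mul_sum]
        exact Nat.mul_le_mul_left _ (ih (E - e j))
      · rw [if_neg hje]
        refine le_of_eq (Finset.sum_eq_zero fun q _ => ?_)
        rw [if_neg (show ¬ (e j + ∑ s, e (q s) = E) by clear * - hje; omega)]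
    refine le_trans (Finset.sum_le_sum (fun j _ => hterm j)) ?_
    -- now sum over j
    rcases Nat.eq_zero_or_pos E with hE | hE
    · subst hE
      have : ∀ j : Fin n, (if e j ≤ 0 then A i j * (A ^ (0 - e j)) i i else 0) = 0 := by
        intro j
        rw [if_neg (show ¬ (e j ≤ 0) by have := he1 j; clear * - this; omega)]
      rw [Finset.sum_congr rfl (fun j _ => this j)]
      simp
    · have hEel : (A ^ E) i i = ∑ j, A i j * (A ^ (E - 1)) j i := by
        conv_lhs => rw [show E = 1 + (E - 1) by clear * - hE; omega, pow_add, pow_one, Matrix.mul_apply]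
      rw [hEel]
      refine Finset.sum_le_sum (fun j _ => ?_)
      by_cases hje : e j ≤ E
      · rw [if_pos hje]
        refine Nat.mul_le_mul_left _ ?_
        have h1 : 0 < (A ^ (e j - 1)) j i := he2 j
        have h2 : (A ^ (e j - 1)) j i * (A ^ (E - e j)) i i ≤ (A ^ (E - 1)) j i := by
          have harith : (e j - 1) + (E - e j) = E - 1 := by have := he1 j; clear * - this hje hE; omega
          calc (A ^ (e j - 1)) j i * (A ^ (E - e j)) i i
              ≤ (A ^ ((e j - 1) + (E - e j))) j i := entry_mul_le A _ _ j i i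
            _ = (A ^ (E - 1)) j i := by rw [harith]
        calc (A ^ (E - e j)) i i = 1 * (A ^ (E - e j)) i i := (one_mul _).symm
          _ ≤ (A ^ (e j - 1)) j i * (A ^ (E - e j)) i i := Nat.mul_le_mul_right _ h1
          _ ≤ (A ^ (E - 1)) j i := h2
      · rw [if_neg hje]; exact Nat.zero_le _


/-- `S^t` is at most the sum of diagonal entries of powers. -/
lemma pow_sum_le (A : Matrix (Fin n) (Fin n) ℕ) (i : Fin n) (e : Fin n → ℕ)
    (he1 : ∀ j, 1 ≤ e j) (he2 : ∀ j, 0 < (A ^ (e j - 1)) j i) (hen : ∀ j, e j ≤ n)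
    (t : ℕ) :
    (∑ j, A i j) ^ t ≤ ∑ E ∈ Finset.range (t * n + 1), (A ^ E) i i := by
  have h1 : (∑ j, A i j) ^ t = ∑ p : Fin t → Fin n, ∏ s, A i (p s) := by
    rw [← Fin.prod_const t (∑ j, A i j), Finset.prod_univ_sum, Fintype.piFinset_univ]
  rw [h1]
  have h2 : ∀ p : Fin t → Fin n, (∏ s, A i (p s))
      = ∑ E ∈ Finset.range (t * n + 1), if (∑ s, e (p s)) = E then ∏ s, A i (p s) else 0 := by
    intro p
    have hle : (∑ s, e (p s)) ≤ t * n := by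
      calc (∑ s, e (p s)) ≤ ∑ _s : Fin t, n := Finset.sum_le_sum fun s _ => hen (p s)
        _ = t * n := by simp [Finset.sum_const, Finset.card_univ, Nat.smul_one_eq_cast]
    have hmem : (∑ s, e (p s)) ∈ Finset.range (t * n + 1) := by
      rw [Finset.mem_range]; clear * - hle; omega
    rw [Finset.sum_ite_eq (Finset.range (t * n + 1)) (∑ s, e (p s))
      (fun _ => ∏ s, A i (p s)), if_pos hmem]
  rw [Finset.sum_congr rfl (fun p _ => h2 p), Finset.sum_comm]
  exact Finset.sum_le_sum fun E _ => count_le A i e he1 he2 t E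




lemma eval_charpoly (M : Matrix (Fin n) (Fin n) ℂ) (μ : ℂ) :
    (M.charpoly).eval μ = (Matrix.scalar (Fin n) μ - M).det := by
  unfold Matrix.charpoly
  rw [show (Polynomial.eval μ : ℂ[X] → ℂ) = ⇑(Polynomial.evalRingHom μ) from rfl,
    RingHom.map_det]
  congr 1
  ext i j
  by_cases h : i = j
  · subst h
    simp [Matrix.charmatrix_apply_eq, Matrix.scalar_apply, Matrix.sub_apply,
      Matrix.diagonal_apply_eq]
  · simp [Matrix.charmatrix_apply_ne _ _ _ h, Matrix.scalar_apply, Matrix.sub_apply,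
      Matrix.diagonal_apply_ne _ h]

lemma mem_spectrum_iff_root (M : Matrix (Fin n) (Fin n) ℂ) (μ : ℂ) :
    μ ∈ spectrum ℂ M ↔ (M.charpoly).eval μ = 0 := by
  have halg : algebraMap ℂ (Matrix (Fin n) (Fin n) ℂ) μ = Matrix.scalar (Fin n) μ := by
    rw [Matrix.scalar_apply, Matrix.algebraMap_eq_diagonal]
    rfl
  rw [spectrum.mem_iff, halg, Matrix.isUnit_iff_isUnit_det, isUnit_iff_ne_zero, not_not,
    eval_charpoly]

lemma spectrum_transpose (M : Matrix (Fin n) (Fin n) ℂ) :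
    spectrum ℂ Mᵀ = spectrum ℂ M := by
  ext μ
  rw [mem_spectrum_iff_root, mem_spectrum_iff_root, eval_charpoly, eval_charpoly]
  have : Matrix.scalar (Fin n) μ - Mᵀ = (Matrix.scalar (Fin n) μ - M)ᵀ := by
    rw [Matrix.transpose_sub]
    congr 1
    rw [Matrix.scalar_apply, Matrix.diagonal_transpose]
  rw [this, Matrix.det_transpose]

end PFAux


namespace PFAux

/-- The main estimate for row sums. -/
lemma row_le {n : ℕ} (hn : 1 ≤ n) (A : Matrix (Fin n) (Fin n) ℕ)
    (hA : IsPerronFrobenius A) (i : Fin n) :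
    ((∑ j, A i j : ℕ) : ℝ≥0∞) ≤ matrixSpectralRadius A ^ n := by
  obtain ⟨k, hk, hkpos⟩ := hA
  set M : Matrix (Fin n) (Fin n) ℂ := A.map (Nat.cast : ℕ → ℂ) with hM
  have hpow : ∀ E : ℕ, M ^ E = (A ^ E).map (Nat.cast : ℕ → ℂ) := by
    intro E
    have h1 : (Nat.castRingHom ℂ).mapMatrix (A ^ E)
        = ((Nat.castRingHom ℂ).mapMatrix A) ^ E := map_pow _ A E
    simpa [RingHom.mapMatrix_apply, hM] using h1.symm
  set p : Polynomial ℂ := M.charpoly with hp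
  have hpmonic : p.Monic := Matrix.charpoly_monic M
  have hpdeg : p.natDegree = n := by
    rw [hp, Matrix.charpoly_natDegree_eq_dim, Fintype.card_fin]
  have hcard : p.roots.card = n := by
    rw [(Polynomial.splits_iff_card_roots).1 (IsAlgClosed.splits p), hpdeg]
  have hroots_ne : p.roots.toFinset.Nonempty := by
    rw [Multiset.toFinset_nonempty]
    intro h0
    rw [h0] at hcard
    simp at hcard
    omega
  obtain ⟨μ₀, hμ₀mem', hmax⟩ := Finset.exists_max_image p.roots.toFinset (fun μ => ‖μ‖) hroots_ne
  have hμ₀root : p.IsRoot μ₀ := Polynomial.isRoot_of_mem_roots (Multiset.mem_toFinset.1 hμ₀mem')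
  have hμ₀spec : μ₀ ∈ spectrum ℂ M := (mem_spectrum_iff_root M μ₀).2 hμ₀root
  set r : ℝ := ‖μ₀‖ with hr
  have hr0 : 0 ≤ r := norm_nonneg _
  -- trace bound
  have htr : ∀ E : ℕ, ((A ^ E).trace : ℝ) ≤ n * r ^ E := by
    intro E
    rcases Nat.eq_zero_or_pos E with hE | hE
    · subst hE
      simp [Matrix.trace_one]
    · have hbound : ∀ ν ∈ (M ^ E).charpoly.roots, ‖ν‖ ≤ r ^ E := by
        intro ν hν
        have hνspec : ν ∈ spectrum ℂ (M ^ E) :=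
          (mem_spectrum_iff_root (M ^ E) ν).2 (Polynomial.isRoot_of_mem_roots hν)
        rw [spectrum.map_pow_of_pos M hE] at hνspec
        obtain ⟨μ, hμspec, hμν⟩ := hνspec
        have hμroot : μ ∈ p.roots := by
          rw [hp, Polynomial.mem_roots hpmonic.ne_zero]
          exact (mem_spectrum_iff_root M μ).1 hμspec
        have hle : ‖μ‖ ≤ r := hmax μ (Multiset.mem_toFinset.2 hμroot)
        calc ‖ν‖ = ‖μ‖ ^ E := by rw [← hμν, norm_pow]
          _ ≤ r ^ E := pow_le_pow_left₀ (norm_nonneg μ) hle E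
      have htreq : (M ^ E).trace = (((A ^ E).trace : ℕ) : ℂ) := by
        rw [hpow E]
        simp [Matrix.trace, Matrix.diag, Matrix.map_apply]
      have h1 : ((A ^ E).trace : ℝ) = ‖(M ^ E).trace‖ := by
        rw [htreq, Complex.norm_natCast]
      rw [h1, Matrix.trace_eq_sum_roots_charpoly]
      have hcardE : (M ^ E).charpoly.roots.card = n := by
        rw [(Polynomial.splits_iff_card_roots).1 (IsAlgClosed.splits _),
          Matrix.charpoly_natDegree_eq_dim, Fintype.card_fin]
      calc ‖(M ^ E).charpoly.roots.sum‖
          ≤ ((M ^ E).charpoly.roots.map (fun ν => ‖ν‖)).sum := norm_multiset_sum_le _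
        _ ≤ ((M ^ E).charpoly.roots.map (fun ν => ‖ν‖)).card • (r ^ E) := by
            refine Multiset.sum_le_card_nsmul _ _ ?_
            intro x hx
            obtain ⟨ν, hν, rfl⟩ := Multiset.mem_map.1 hx
            exact hbound ν hν
        _ = n * r ^ E := by rw [Multiset.card_map, hcardE, nsmul_eq_mul]
  have hdiag : ∀ (E : ℕ) (x : Fin n), (A ^ E) x x ≤ (A ^ E).trace := by
    intro E x
    exact Finset.single_le_sum (f := fun t => (A ^ E) t t) (fun t _ => Nat.zero_le _)
      (Finset.mem_univ x)
  have hr1 : 1 ≤ r := by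
    by_contra hlt
    push_neg at hlt
    have h1 : (n : ℕ) ≤ (A ^ k).trace := by
      have hterm : ∀ x ∈ Finset.univ, 1 ≤ (A ^ k) x x := fun x _ => hkpos x x
      calc (n : ℕ) = ∑ _x : Fin n, 1 := by simp
        _ ≤ ∑ x : Fin n, (A ^ k) x x := Finset.sum_le_sum hterm
        _ = (A ^ k).trace := rfl
    have h2 : (n : ℝ) ≤ n * r ^ k := le_trans (by exact_mod_cast h1) (htr k)
    have h3 : r ^ k < 1 := pow_lt_one₀ hr0 hlt (by omega)
    have hn' : (0 : ℝ) < n := by exact_mod_cast hn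
    nlinarith
  have hpath : ∀ j : Fin n, ∃ m, m < n ∧ 0 < (A ^ m) j i := by
    intro j
    exact exists_short hn k (hkpos j i)
  choose m hmlt hmpos using hpath
  set e : Fin n → ℕ := fun j => m j + 1 with he
  have he1 : ∀ j, 1 ≤ e j := fun j => Nat.le_add_left 1 (m j)
  have he2 : ∀ j, 0 < (A ^ (e j - 1)) j i := by
    intro j
    simpa [he] using hmpos j
  have hen : ∀ j, e j ≤ n := fun j => hmlt j
  set S : ℕ := ∑ j, A i j with hS
  have key : ∀ t : ℕ, ((S : ℝ)) ^ t ≤ ((t * n + 1 : ℕ) : ℝ) * (n * r ^ (t * n)) := by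
    intro t
    have h1 : S ^ t ≤ ∑ E ∈ Finset.range (t * n + 1), (A ^ E) i i :=
      pow_sum_le A i e he1 he2 hen t
    have h2 : ((∑ E ∈ Finset.range (t * n + 1), (A ^ E) i i : ℕ) : ℝ)
        ≤ ((t * n + 1 : ℕ) : ℝ) * (n * r ^ (t * n)) := by
      push_cast
      calc (∑ E ∈ Finset.range (t * n + 1), ((A ^ E) i i : ℝ))
          ≤ ∑ _E ∈ Finset.range (t * n + 1), ((n : ℝ) * r ^ (t * n)) := by
            refine Finset.sum_le_sum fun E hE => ?_
            have hE' : E ≤ t * n := by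
              rw [Finset.mem_range] at hE
              omega
            calc ((A ^ E) i i : ℝ) ≤ ((A ^ E).trace : ℝ) := by exact_mod_cast hdiag E i
              _ ≤ n * r ^ E := htr E
              _ ≤ n * r ^ (t * n) := by
                  have hmono : r ^ E ≤ r ^ (t * n) := pow_le_pow_right₀ hr1 hE'
                  have hn' : (0 : ℝ) ≤ n := by positivity
                  nlinarith
        _ = ((t : ℝ) * n + 1) * ((n : ℝ) * r ^ (t * n)) := by
            rw [Finset.sum_const, Finset.card_range]
            rw [nsmul_eq_mul]
            push_cast
            ring
    calc ((S : ℝ)) ^ t = ((S ^ t : ℕ) : ℝ) := by push_cast; ring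
      _ ≤ ((∑ E ∈ Finset.range (t * n + 1), (A ^ E) i i : ℕ) : ℝ) := by exact_mod_cast h1
      _ ≤ _ := h2
  have hmain : (S : ℝ) ≤ r ^ n := by
    by_contra hlt
    push_neg at hlt
    have hrn_pos : (0 : ℝ) < r ^ n := by positivity
    set q : ℝ := (S : ℝ) / r ^ n with hq
    have hq1 : 1 < q := (one_lt_div hrn_pos).2 hlt
    set c : ℝ := q - 1 with hc
    have hc0 : 0 < c := by rw [hc]; linarith
    have hqt : ∀ t : ℕ, q ^ t ≤ ((t * n + 1 : ℕ) : ℝ) * n := by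
      intro t
      have hk1 := key t
      have hpos : (0 : ℝ) < r ^ (t * n) := by positivity
      have hrn_t : (r ^ n) ^ t = r ^ (t * n) := by rw [← pow_mul, mul_comm]
      rw [hq, div_pow, hrn_t, div_le_iff₀ hpos]
      calc (S : ℝ) ^ t ≤ ((t * n + 1 : ℕ) : ℝ) * (n * r ^ (t * n)) := hk1
        _ = ((t * n + 1 : ℕ) : ℝ) * n * r ^ (t * n) := by ring
    obtain ⟨t₀, ht₀⟩ := exists_nat_gt ((2 * (n : ℝ) ^ 2 + n) / c ^ 2)
    set t : ℕ := t₀ + 1 with htdef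
    have ht1 : (1 : ℝ) ≤ t := by exact_mod_cast Nat.le_add_left 1 t₀
    have htc : (2 * (n : ℝ) ^ 2 + n) < t * c ^ 2 := by
      have hlt2 : ((t₀ : ℝ)) < t := by exact_mod_cast Nat.lt_succ_self t₀
      have h' : (2 * (n : ℝ) ^ 2 + n) / c ^ 2 < t := lt_trans ht₀ hlt2
      rw [div_lt_iff₀ (by positivity)] at h'
      linarith
    have hb : 1 + (t : ℝ) * c ≤ q ^ t := by
      have h := one_add_mul_le_pow (by linarith : (-2 : ℝ) ≤ c) t
      have hqc : 1 + c = q := by rw [hc]; ring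
      rwa [hqc] at h
    have h2t := hqt (2 * t)
    have hq2 : q ^ (2 * t) = (q ^ t) ^ 2 := by rw [mul_comm, pow_mul]
    have hsq : (1 + (t : ℝ) * c) ^ 2 ≤ (q ^ t) ^ 2 := by
      have h0 : (0 : ℝ) ≤ 1 + t * c := by positivity
      exact pow_le_pow_left₀ h0 hb 2
    rw [hq2] at h2t
    have hcast : ((2 * t * n + 1 : ℕ) : ℝ) = 2 * (t : ℝ) * n + 1 := by push_cast; ring
    rw [hcast] at h2t
    have hnr : (1 : ℝ) ≤ n := by exact_mod_cast hn
    have hmul : (t : ℝ) * (2 * (n : ℝ) ^ 2 + n) < t * (t * c ^ 2) :=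
      mul_lt_mul_of_pos_left htc (by linarith)
    nlinarith [hsq, h2t, hmul, hc0, ht1, hnr, sq_nonneg ((t : ℝ) * c)]
  -- package into ℝ≥0∞
  have hS' : ((S : ℝ≥0)) ≤ ‖μ₀‖₊ ^ n := by
    rw [← NNReal.coe_le_coe]
    push_cast
    simpa [hr] using hmain
  have hspec_le : ((‖μ₀‖₊ : ℝ≥0∞)) ≤ matrixSpectralRadius A := by
    have h := le_iSup₂ (f := fun k (_ : k ∈ spectrum ℂ M) => ((‖k‖₊ : ℝ≥0∞))) μ₀ hμ₀spec
    simpa [matrixSpectralRadius, spectralRadius, hM] using h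
  calc ((S : ℕ) : ℝ≥0∞) = ((S : ℝ≥0) : ℝ≥0∞) := by simp
    _ ≤ ((‖μ₀‖₊ ^ n : ℝ≥0) : ℝ≥0∞) := ENNReal.coe_le_coe.2 hS'
    _ = ((‖μ₀‖₊ : ℝ≥0∞)) ^ n := by rw [ENNReal.coe_pow]
    _ ≤ matrixSpectralRadius A ^ n := pow_le_pow_left' hspec_le n

end PFAux


/-- For an `n × n` Perron–Frobenius matrix `A` with `n ≥ 1`, every row sum and
every column sum of `A` is at most `λ(A)^n`. -/
theorem row_col_sums_le_spectral_radius_pow {n : ℕ} (hn : 1 ≤ n)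
    (A : Matrix (Fin n) (Fin n) ℕ) (hA : IsPerronFrobenius A) :
    (∀ i, ((∑ j, A i j : ℕ) : ℝ≥0∞) ≤ matrixSpectralRadius A ^ n) ∧
      (∀ j, ((∑ i, A i j : ℕ) : ℝ≥0∞) ≤ matrixSpectralRadius A ^ n) := by
  constructor
  · exact fun i => PFAux.row_le hn A hA i
  · intro j
    have hAT : IsPerronFrobenius Aᵀ := by
      obtain ⟨k, hk, hpos⟩ := hA
      refine ⟨k, hk, fun i j => ?_⟩
      rw [← Matrix.transpose_pow]
      exact hpos j i
    have hrad : matrixSpectralRadius Aᵀ = matrixSpectralRadius A := by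
      unfold matrixSpectralRadius spectralRadius
      rw [show (Aᵀ).map (Nat.cast : ℕ → ℂ) = (A.map (Nat.cast : ℕ → ℂ))ᵀ from
        Matrix.transpose_map]
      rw [PFAux.spectrum_transpose]
    have h := PFAux.row_le hn Aᵀ hAT j
    rw [hrad] at h
    simpa using h
end

section
/- Let Q be a finite quiver with exactly n vertices and E arrows in total, and suppose Q is strongly connected: for every ordered pair of vertices (u, w) there is a directed path of positive length from u to w. Then for every vertex v, the number of directed paths of length n in Q starting at v (paths in the sense of quivers, where repetition of vertices and arrows is allowed) is at least E − n + 1. -/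
open Quiver

namespace CardPathsAux

universe u w
variable {V : Type u} [Quiver.{w} V]

/-- The list of arrows of a path, as elements of the total arrow type. -/
def arrows {a : V} : ∀ {b : V}, Path a b → List (Σ x : V, Σ y : V, x ⟶ y)
  | _, .nil => []
  | _, .cons p e => ⟨_, _, e⟩ :: arrows p

@[simp] lemma arrows_nil {a : V} : arrows (.nil : Path a a) = [] := rfl

@[simp] lemma arrows_cons {a b c : V} (p : Path a b) (e : b ⟶ c) :
    arrows (p.cons e) = ⟨b, c, e⟩ :: arrows p := rfl

lemma arrows_length {a b : V} (p : Path a b) : (arrows p).length = p.length := by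
  induction p with
  | nil => rfl
  | cons p e ih => simp [Path.length_cons, ih]

lemma arrows_inj {a : V} {b c : V} (p : Path a b) (q : Path a c)
    (h : arrows p = arrows q) : (⟨b, p⟩ : Σ w : V, Path a w) = ⟨c, q⟩ := by
  induction p generalizing c q with
  | nil =>
    cases q with
    | nil => rfl
    | cons q f => simp at h
  | cons p e ih =>
    cases q with
    | nil => simp at h
    | cons q f =>
      simp only [arrows_cons, List.cons.injEq, Sigma.mk.inj_iff] at h
      obtain ⟨⟨rfl, h1⟩, h2⟩ := h
      rw [heq_eq_eq, Sigma.mk.inj_iff] at h1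
      obtain ⟨rfl, h1⟩ := h1
      rw [heq_eq_eq] at h1
      subst h1
      have := ih q h2
      rw [Sigma.mk.inj_iff] at this
      obtain ⟨-, hpq⟩ := this
      rw [heq_eq_eq] at hpq
      subst hpq
      rfl

lemma finite_paths [Finite V] [∀ u w : V, Finite (u ⟶ w)] (v : V) (n : ℕ) :
    Finite { p : Σ w : V, Path v w // p.2.length = n } := by
  haveI : Fintype (Σ x : V, Σ y : V, x ⟶ y) := Fintype.ofFinite _
  refine Finite.of_injective
    (β := List.Vector (Σ x : V, Σ y : V, x ⟶ y) n)
    (fun p => ⟨arrows p.1.2, by rw [arrows_length, p.2]⟩) ?_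
  intro p q h
  have h' : arrows p.1.2 = arrows q.1.2 :=
    congrArg (fun x : List.Vector (Σ x : V, Σ y : V, x ⟶ y) n => x.toList) h
  exact Subtype.ext (arrows_inj _ _ h')

/-- distance from `v` -/
noncomputable def d (v u : V) : ℕ := sInf {k | ∃ p : Path v u, p.length = k}

lemma d_le {v u : V} (p : Path v u) : d v u ≤ p.length := Nat.sInf_le ⟨p, rfl⟩

lemma d_spec {v u : V} (h : Nonempty (Path v u)) :
    ∃ p : Path v u, p.length = d v u := by
  obtain ⟨p⟩ := h
  exact Nat.sInf_mem (s := {k | ∃ p : Path v u, p.length = k}) ⟨p.length, p, rfl⟩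

lemma eq_of_d_zero {v u : V} (hne : Nonempty (Path v u)) (h : d v u = 0) : v = u := by
  obtain ⟨p, hp⟩ := d_spec hne
  exact p.eq_of_length_zero (hp.trans h)

lemma exists_parent {v u : V} (hne : Nonempty (Path v u)) (h : d v u ≠ 0) :
    ∃ x : Σ w : V, w ⟶ u, d v x.1 < d v u := by
  obtain ⟨p, hp⟩ := d_spec hne
  cases p with
  | nil => exact (h (by simpa using hp.symm)).elim
  | cons p e =>
    refine ⟨⟨_, e⟩, ?_⟩
    have h1 := d_le p
    have hlen : p.length + 1 = d v u := by simpa using hp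
    dsimp only
    omega

noncomputable def par (v : V) (hcn : ∀ w : V, Nonempty (Path v w)) (u : V)
    (h : d v u ≠ 0) : Σ w : V, w ⟶ u :=
  (exists_parent (hcn u) h).choose

lemma par_lt (v : V) (hcn : ∀ w : V, Nonempty (Path v w)) (u : V) (h : d v u ≠ 0) :
    d v (par v hcn u h).1 < d v u :=
  (exists_parent (hcn u) h).choose_spec

/-- tree path from `v` to `u` -/
noncomputable def tau (v : V) (hcn : ∀ w : V, Nonempty (Path v w)) : ∀ u : V, Path v u :=
  fun u =>
    if h : d v u = 0 then
      (Path.nil : Path v v).cast rfl (eq_of_d_zero (hcn u) h)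
    else
      (tau v hcn (par v hcn u h).1).comp (par v hcn u h).2.toPath
termination_by u => d v u
decreasing_by exact par_lt v hcn u h

lemma tau_pos (v : V) (hcn : ∀ w : V, Nonempty (Path v w)) (u : V) (h : d v u ≠ 0) :
    tau v hcn u = (tau v hcn (par v hcn u h).1).comp (par v hcn u h).2.toPath := by
  rw [tau, dif_neg h]

lemma tau_length (v : V) (hcn : ∀ w : V, Nonempty (Path v w)) :
    ∀ N u, d v u ≤ N → (tau v hcn u).length ≤ d v u := by
  intro N
  induction N with
  | zero =>
    intro u hu
    have h0 : d v u = 0 := Nat.le_zero.mp hu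
    obtain rfl := eq_of_d_zero (hcn u) h0
    rw [tau, dif_pos h0]
    simp [Path.cast_rfl_rfl]
  | succ N ih =>
    intro u hu
    by_cases h : d v u = 0
    · obtain rfl := eq_of_d_zero (hcn u) h
      rw [tau, dif_pos h]
      simp [Path.cast_rfl_rfl, h]
    · rw [tau_pos v hcn u h]
      have hlt := par_lt v hcn u h
      have := ih (par v hcn u h).1 (by omega)
      simp only [Path.length_comp, Hom.toPath, Path.length_cons, Path.length_nil]
      omega

/-- the set of tree arrows -/
noncomputable def T (v : V) (hcn : ∀ w : V, Nonempty (Path v w)) :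
    Set (Σ x : V, Σ y : V, x ⟶ y) :=
  Set.range (fun x : {u : V // d v u ≠ 0} =>
    (⟨(par v hcn x.1 x.2).1, x.1, (par v hcn x.1 x.2).2⟩ : Σ x : V, Σ y : V, x ⟶ y))

open Classical in
/-- the first arrow of a path not satisfying `P` -/
noncomputable def firstNot (P : (Σ x : V, Σ y : V, x ⟶ y) → Prop) {a : V} :
    ∀ {b : V}, Path a b → Option (Σ x : V, Σ y : V, x ⟶ y)
  | _, .nil => none
  | _, .cons p e => (firstNot P p).orElse
      (fun _ => if P ⟨_, _, e⟩ then none else some ⟨_, _, e⟩)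

open Classical in
@[simp] lemma firstNot_nil (P : (Σ x : V, Σ y : V, x ⟶ y) → Prop) {a : V} :
    firstNot P (.nil : Path a a) = none := rfl

open Classical in
@[simp] lemma firstNot_cons (P : (Σ x : V, Σ y : V, x ⟶ y) → Prop) {a b c : V}
    (p : Path a b) (e : b ⟶ c) :
    firstNot P (p.cons e) = (firstNot P p).orElse
      (fun _ => if P ⟨b, c, e⟩ then none else some ⟨b, c, e⟩) := rfl

lemma firstNot_comp (P : (Σ x : V, Σ y : V, x ⟶ y) → Prop) {a b : V}
    (p : Path a b) : ∀ {c : V} (q : Path b c),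
    firstNot P (p.comp q) = (firstNot P p).orElse (fun _ => firstNot P q) := by
  intro c q
  induction q with
  | nil => simp [Path.comp_nil]
  | cons q e ih =>
    rw [Path.comp_cons, firstNot_cons, ih, firstNot_cons]
    cases firstNot P p <;> simp [Option.orElse]

lemma firstNot_tau (v : V) (hcn : ∀ w : V, Nonempty (Path v w)) :
    ∀ N u, d v u ≤ N → firstNot (· ∈ T v hcn) (tau v hcn u) = none := by
  intro N
  induction N with
  | zero =>
    intro u hu
    have h0 : d v u = 0 := Nat.le_zero.mp hu
    obtain rfl := eq_of_d_zero (hcn u) h0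
    rw [tau, dif_pos h0, Quiver.Path.cast_rfl_rfl, firstNot_nil]
  | succ N ih =>
    intro u hu
    by_cases h : d v u = 0
    · obtain rfl := eq_of_d_zero (hcn u) h
      rw [tau, dif_pos h, Quiver.Path.cast_rfl_rfl, firstNot_nil]
    · rw [tau_pos v hcn u h, firstNot_comp]
      have hlt := par_lt v hcn u h
      rw [ih (par v hcn u h).1 (by omega)]
      have hmem : (⟨(par v hcn u h).1, u, (par v hcn u h).2⟩ :
          Σ x : V, Σ y : V, x ⟶ y) ∈ T v hcn := ⟨⟨u, h⟩, rfl⟩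
      simp [Hom.toPath, Option.orElse, hmem]

end CardPathsAux

open CardPathsAux Quiver

/-- Spanning-tree counting bound: in a finite strongly connected quiver with `n`
vertices and `E` arrows in total, the number of directed paths of length `n`
starting at any fixed vertex `v` is at least `E − n + 1`. -/
theorem card_paths_of_length_ge {V : Type*} [Quiver V] [Finite V]
    [∀ u w : V, Finite (u ⟶ w)] {n E : ℕ}
    (hn : Nat.card V = n)
    (hE : Nat.card (Σ u : V, Σ w : V, u ⟶ w) = E)
    (hconn : ∀ u w : V, ∃ p : Quiver.Path u w, 0 < p.length)
    (v : V) :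
    E - n + 1 ≤ Nat.card { p : Σ w : V, Quiver.Path v w // p.2.length = n } := by
  classical
  haveI := finite_paths v n
  -- basic facts
  have hcn : ∀ w : V, Nonempty (Path v w) := fun w => ⟨(hconn v w).choose⟩
  have hn1 : 1 ≤ n := by
    rw [← hn]
    exact Nat.one_le_iff_ne_zero.mpr (Nat.card_ne_zero.mpr ⟨⟨v⟩, inferInstance⟩)
  -- every vertex has an outgoing arrow, hence n ≤ E
  have hout : ∀ a : V, ∃ x : Σ y : V, a ⟶ y, True := by
    intro a
    obtain ⟨p, hp⟩ := hconn a a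
    obtain ⟨c, f, q, -, -⟩ := p.eq_toPath_comp_of_length_eq_succ
      (n := p.length - 1) (by omega)
    exact ⟨⟨c, f⟩, trivial⟩
  have hnE : n ≤ E := by
    rw [← hn, ← hE]
    exact Nat.card_le_card_of_injective
      (fun a : V => (⟨a, (hout a).choose⟩ : Σ u : V, Σ w : V, u ⟶ w))
      (fun a b h => congrArg Sigma.fst h)
  -- extension of paths
  have hext : ∀ (a : V) (k : ℕ), ∃ x : Σ b : V, Path a b, x.2.length = k := by
    intro a k
    induction k with
    | zero => exact ⟨⟨a, Path.nil⟩, rfl⟩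
    | succ k ih =>
      obtain ⟨⟨b, p⟩, hp⟩ := ih
      obtain ⟨⟨c, f⟩, -⟩ := hout b
      exact ⟨⟨c, p.cons f⟩, by simp [hp]⟩
  -- BFS: every vertex is reachable within n - 1 steps
  have reach : ∀ u : V, ∃ p : Path v u, p.length ≤ n - 1 := by
    set S : ℕ → Set V := fun k => {u | ∃ p : Path v u, p.length ≤ k} with hS
    have Smono : ∀ j k, j ≤ k → S j ⊆ S k := by
      rintro j k hjk u ⟨p, hp⟩
      exact ⟨p, hp.trans hjk⟩
    have Sstep : ∀ k u, u ∈ S (k + 1) → u ∈ S k ∨ ∃ w ∈ S k, Nonempty (w ⟶ u) := by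
      rintro k u ⟨p, hp⟩
      cases p with
      | nil => exact Or.inl ⟨Path.nil, by simp⟩
      | cons p e =>
        have : p.length ≤ k := by simpa using hp
        exact Or.inr ⟨_, ⟨p, this⟩, ⟨e⟩⟩
    have Sclosed : ∀ k, S (k + 1) ⊆ S k → ∀ m, S m ⊆ S k := by
      intro k hk m
      induction m with
      | zero => exact fun u hu => Smono 0 k (Nat.zero_le k) hu
      | succ m ih =>
        intro u hu
        rcases Sstep m u hu with h | ⟨w, hw, ⟨e⟩⟩
        · exact ih h
        · obtain ⟨p, hp⟩ := ih hw
          exact hk ⟨p.cons e, by simp; omega⟩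
    have Sgrow : ∀ k, S k = Set.univ ∨ k + 1 ≤ (S k).ncard := by
      intro k
      induction k with
      | zero =>
        right
        have hv : v ∈ S 0 := ⟨Path.nil, le_refl _⟩
        have hpos : 0 < (S 0).ncard := (Set.ncard_pos (Set.toFinite _)).mpr ⟨v, hv⟩
        omega
      | succ k ih =>
        rcases ih with h | h
        · left
          apply Set.eq_univ_of_univ_subset
          rw [← h]; exact Smono k (k+1) (by omega)
        · by_cases heq : S (k + 1) = S k
          · left
            apply Set.eq_univ_iff_forall.mpr
            intro u
            obtain ⟨p, -⟩ := hconn v u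
            have : u ∈ S p.length := ⟨p, le_refl _⟩
            have := Sclosed k (by rw [heq]) p.length this
            exact Smono k (k+1) (by omega) this
          · right
            have hss : S k ⊂ S (k + 1) :=
              ssubset_of_subset_of_ne (Smono k (k+1) (by omega)) (Ne.symm heq)
            have := Set.ncard_lt_ncard hss (Set.toFinite _)
            omega
    rcases Sgrow (n - 1) with h | h
    · intro u
      have : u ∈ S (n - 1) := h ▸ Set.mem_univ u
      exact this
    · intro u
      have hle : (S (n-1)).ncard ≤ Nat.card V := by
        rw [← Set.ncard_univ]
        exact Set.ncard_le_ncard (Set.subset_univ _) (Set.toFinite _)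
      have huniv : S (n - 1) = Set.univ := by
        apply Set.eq_of_subset_of_ncard_le (Set.subset_univ _) ?_ (Set.toFinite _)
        rw [Set.ncard_univ, hn]
        omega
      exact Set.eq_univ_iff_forall.mp huniv u
  have d_le_n1 : ∀ u : V, d v u ≤ n - 1 := by
    intro u
    obtain ⟨p, hp⟩ := reach u
    exact (d_le p).trans hp
  -- the injection from non-tree arrows to paths of length n
  set P := (· ∈ T v hcn)
  have tau_len : ∀ u : V, (tau v hcn u).length ≤ n - 1 :=
    fun u => (tau_length v hcn (d v u) u le_rfl).trans (d_le_n1 u)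
  have tau_first : ∀ u : V, firstNot P (tau v hcn u) = none :=
    fun u => firstNot_tau v hcn (d v u) u le_rfl
  -- build, for each non-tree arrow, a path of length n
  have key : ∀ x : Σ a : V, Σ b : V, a ⟶ b, x ∉ T v hcn →
      ∃ p : { p : Σ w : V, Path v w // p.2.length = n },
        firstNot P p.1.2 = some x := by
    rintro ⟨a, b, e⟩ hx
    have hlen : ((tau v hcn a).cons e).length ≤ n := by
      simp only [Path.length_cons]
      have := tau_len a
      omega
    obtain ⟨⟨c, q⟩, hq⟩ := hext b (n - ((tau v hcn a).cons e).length)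
    refine ⟨⟨⟨c, ((tau v hcn a).cons e).comp q⟩, ?_⟩, ?_⟩
    · simp only [Path.length_comp, hq]
      omega
    · rw [firstNot_comp, firstNot_cons, tau_first a]
      simp [Option.orElse, P, hx]
  -- conclude by counting
  have hTcard : (T v hcn).ncard ≤ n - 1 := by
    have h1 : (T v hcn).ncard ≤ Nat.card {u : V // d v u ≠ 0} := by
      rw [← Nat.card_coe_set_eq]
      exact Nat.card_le_card_of_surjective _ (Set.rangeFactorization_surjective)
    have h2 : Nat.card {u : V // d v u ≠ 0} ≤ Nat.card {u : V // u ≠ v} := by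
      apply Nat.card_le_card_of_injective
        (fun x => ⟨x.1, fun hxv => x.2 (by rw [hxv]; exact Nat.le_zero.mp (d_le Path.nil))⟩)
      intro x y h
      simp only [Subtype.mk.injEq] at h
      exact Subtype.ext h
    have h3 : Nat.card {u : V // u ≠ v} = n - 1 := by
      have hset : {u : V | u ≠ v} = ({v} : Set V)ᶜ := by
        ext u; simp [Ne]
      have := Set.ncard_add_ncard_compl ({v} : Set V)
      rw [Set.ncard_singleton, hn] at this
      rw [show {u : V // u ≠ v} = ↥{u : V | u ≠ v} from rfl,
        Nat.card_coe_set_eq, hset]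
      omega
    omega
  have hcompl : E - (n - 1) ≤ ((T v hcn)ᶜ).ncard := by
    have := Set.ncard_add_ncard_compl (T v hcn)
    rw [hE] at this
    omega
  have hinj : Nat.card ((T v hcn)ᶜ : Set _) ≤
      Nat.card { p : Σ w : V, Path v w // p.2.length = n } := by
    choose f hf using key
    apply Nat.card_le_card_of_injective (fun x => f x.1 x.2)
    intro x y hxy
    dsimp only at hxy
    have h1 := hf x.1 x.2
    have h2 := hf y.1 y.2
    rw [hxy] at h1
    exact Subtype.ext (Option.some.inj (h1.symm.trans h2))
  rw [Nat.card_coe_set_eq] at hinj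
  omega
end
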